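/- Let f_i be convex and L-smooth with common minimizer relation through x* ∈ argmin f, f = (1/n)Σ f_i convex, γ > 0. Define W^k = Σ_{i=1}^n ‖φ_i^k − x* − γ f_i'(φ_i^k) + γ f_i'(x*)‖². If φ_i^{k+1} = x^k for i ∈ S^k and φ_i^{k+1} = φ_i^k otherwise, where S^k is drawn from a proper uniform sampling with p_i = τ/n, then E_k[W^{k+1}] ≤ (1 − τ/n) W^k + τ ‖x^k − x*‖² + 2 L τ γ² (f(x^k) − f(x*)). -/

import Mathlib

open Finset intervalIntegral
open scoped RealInnerProductSpace

noncomputable section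

variable {E : Type*} [NormedAddCommGroup E] [InnerProductSpace ℝ E] [CompleteSpace E]

lemma line_hasDerivAt {F : E → ℝ} {G : E → E} (hg : ∀ y, HasGradientAt F (G y) y)
    (a b : E) (t : ℝ) :
    HasDerivAt (fun s : ℝ => F (a + s • (b - a))) ⟪G (a + t • (b - a)), b - a⟫ t := by
  have hline : HasDerivAt (fun s : ℝ => a + s • (b - a)) (b - a) t := by
    simpa using ((hasDerivAt_id t).smul_const (b - a)).const_add a
  have h1 : HasFDerivAt F (InnerProductSpace.toDual ℝ E (G (a + t • (b - a))))
      (a + t • (b - a)) := hg _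
  simpa [InnerProductSpace.toDual_apply_apply, Function.comp_def] using h1.comp_hasDerivAt t hline

lemma grad_convex_ineq {F : E → ℝ} {G : E → E} (hconv : ConvexOn ℝ Set.univ F)
    (hg : ∀ y, HasGradientAt F (G y) y) (a b : E) :
    F a + ⟪G a, b - a⟫ ≤ F b := by
  set u : ℝ → ℝ := fun s => F (a + s • (b - a)) with hu
  have hcu : ConvexOn ℝ Set.univ u := by
    have := hconv.comp_affineMap (AffineMap.lineMap a b : ℝ →ᵃ[ℝ] E)
    have he : (F ∘ (AffineMap.lineMap a b : ℝ →ᵃ[ℝ] E)) = u := by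
      funext s
      simp [u, AffineMap.lineMap_apply, add_comm]
    rw [he] at this
    simpa using this
  have hd : HasDerivAt u ⟪G a, b - a⟫ 0 := by
    simpa using line_hasDerivAt hg a b 0
  have hslope := hcu.le_slope_of_hasDerivAt (Set.mem_univ 0) (Set.mem_univ 1)
    one_pos hd
  have h0 : u 0 = F a := by simp [u]
  have h1 : u 1 = F b := by simp [u]
  rw [slope_def_field] at hslope
  rw [h0, h1] at hslope
  simp at hslope
  linarith

lemma descent_lemma {F : E → ℝ} {G : E → E} {L : ℝ}
    (hg : ∀ y, HasGradientAt F (G y) y)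
    (hL : ∀ x y, ‖G x - G y‖ ≤ L * ‖x - y‖) (a b : E) :
    F b ≤ F a + ⟪G a, b - a⟫ + L / 2 * ‖b - a‖ ^ 2 := by
  set u : ℝ → ℝ := fun s => F (a + s • (b - a)) with hu
  set u' : ℝ → ℝ := fun s => ⟪G (a + s • (b - a)), b - a⟫ with hu'
  have hd : ∀ t ∈ Set.uIcc (0:ℝ) 1, HasDerivAt u (u' t) t := fun t _ =>
    line_hasDerivAt hg a b t
  have hGcont : Continuous G := by
    have : LipschitzWith (Real.toNNReal L) G := by
      apply LipschitzWith.of_dist_le_mul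
      intro x y
      rw [dist_eq_norm, dist_eq_norm]
      calc ‖G x - G y‖ ≤ L * ‖x - y‖ := hL x y
        _ ≤ (Real.toNNReal L) * ‖x - y‖ :=
            mul_le_mul_of_nonneg_right (Real.le_coe_toNNReal L) (norm_nonneg _)
    exact this.continuous
  have hcont : Continuous u' := by
    apply Continuous.inner
    · exact hGcont.comp (by continuity)
    · exact continuous_const
  have hint : IntervalIntegrable u' MeasureTheory.volume 0 1 :=
    hcont.intervalIntegrable 0 1
  have hftc : ∫ t in (0:ℝ)..1, u' t = u 1 - u 0 :=
    integral_eq_sub_of_hasDerivAt hd hint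
  have hbound : ∫ t in (0:ℝ)..1, u' t ≤ ∫ t in (0:ℝ)..1, (u' 0 + L * ‖b - a‖ ^ 2 * t) := by
    apply integral_mono_on (by norm_num) hint
    · exact IntervalIntegrable.add intervalIntegrable_const
        ((by continuity : Continuous (fun t : ℝ => L * ‖b - a‖ ^ 2 * t)).intervalIntegrable 0 1)
    · intro t ht
      have ht0 : 0 ≤ t := ht.1
      have key : u' t - u' 0 ≤ L * ‖b - a‖ ^ 2 * t := by
        have h2 : u' t - u' 0 = ⟪G (a + t • (b - a)) - G a, b - a⟫ := by
          simp [u', inner_sub_left]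
        rw [h2]
        calc ⟪G (a + t • (b - a)) - G a, b - a⟫ ≤ ‖G (a + t • (b - a)) - G a‖ * ‖b - a‖ :=
              real_inner_le_norm _ _
          _ ≤ (L * ‖a + t • (b - a) - a‖) * ‖b - a‖ :=
              mul_le_mul_of_nonneg_right (hL _ _) (norm_nonneg _)
          _ = L * ‖b - a‖ ^ 2 * t := by
              rw [add_sub_cancel_left, norm_smul, Real.norm_eq_abs, abs_of_nonneg ht0]
              ring
      linarith
  have hval : ∫ t in (0:ℝ)..1, (u' 0 + L * ‖b - a‖ ^ 2 * t) = u' 0 + L / 2 * ‖b - a‖ ^ 2 := by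
    rw [integral_add intervalIntegrable_const
      ((by continuity : Continuous (fun t : ℝ => L * ‖b - a‖ ^ 2 * t)).intervalIntegrable 0 1)]
    rw [integral_const, integral_const_mul, integral_id]
    simp [smul_eq_mul]
    ring
  have h0 : u 0 = F a := by simp [u]
  have h1 : u 1 = F b := by simp [u]
  have h00 : u' 0 = ⟪G a, b - a⟫ := by simp [u']
  rw [hftc, hval, h0, h1, h00] at hbound
  linarith

lemma coco {F : E → ℝ} {G : E → E} {L : ℝ} (hconv : ConvexOn ℝ Set.univ F)
    (hg : ∀ y, HasGradientAt F (G y) y)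
    (hL : ∀ x y, ‖G x - G y‖ ≤ L * ‖x - y‖) (hL0 : 0 ≤ L) (a b : E) :
    ‖G a - G b‖ ^ 2 ≤ 2 * L * (F a - F b - ⟪G b, a - b⟫) := by
  rcases eq_or_lt_of_le hL0 with h0 | hLpos
  · have h := hL a b
    rw [← h0, zero_mul] at h
    have hz : ‖G a - G b‖ = 0 := le_antisymm h (norm_nonneg _)
    rw [hz, ← h0]
    norm_num
  · set z := G a - G b with hz
    set w := a - L⁻¹ • z with hw
    have h1 := descent_lemma hg hL a w
    have h2 := grad_convex_ineq hconv hg b w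
    have hwa : w - a = -(L⁻¹ • z) := by rw [hw]; abel
    have hwb : w - b = (a - b) - L⁻¹ • z := by rw [hw]; abel
    rw [hwa, inner_neg_right, real_inner_smul_right] at h1
    rw [hwb, inner_sub_right, real_inner_smul_right] at h2
    have hnorm : ‖-(L⁻¹ • z)‖ ^ 2 = L⁻¹ ^ 2 * ‖z‖ ^ 2 := by
      rw [norm_neg, norm_smul, mul_pow, Real.norm_eq_abs, sq_abs]
    rw [hnorm] at h1
    have hiz : ⟪G a, z⟫ - ⟪G b, z⟫ = ‖z‖ ^ 2 := by
      rw [← inner_sub_left, ← hz, real_inner_self_eq_norm_sq]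
    have hLne : L ≠ 0 := ne_of_gt hLpos
    have hc : L / 2 * (L⁻¹ ^ 2 * ‖z‖ ^ 2) = L⁻¹ / 2 * ‖z‖ ^ 2 := by
      field_simp
    have hiz2 : L⁻¹ * ⟪G a, z⟫ - L⁻¹ * ⟪G b, z⟫ = L⁻¹ * ‖z‖ ^ 2 := by
      rw [← mul_sub, hiz]
    have hD : L⁻¹ / 2 * ‖z‖ ^ 2 ≤ F a - F b - ⟪G b, a - b⟫ := by
      linarith [h1, h2, hc, hiz2]
    have hmul := mul_le_mul_of_nonneg_left hD (le_of_lt hLpos)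
    have hcancel : L * (L⁻¹ / 2 * ‖z‖ ^ 2) = ‖z‖ ^ 2 / 2 := by
      field_simp
    rw [hcancel] at hmul
    linarith

end

open Finset

noncomputable section

theorem stmt7 {d n : ℕ} (hn : 0 < n)
    (f : Fin n → EuclideanSpace ℝ (Fin d) → ℝ)
    (g : Fin n → EuclideanSpace ℝ (Fin d) → EuclideanSpace ℝ (Fin d)) (L : ℝ)
    (hconv : ∀ i, ConvexOn ℝ Set.univ (f i))
    (hg : ∀ i y, HasGradientAt (f i) (g i y) y)
    (hL : ∀ i x y, ‖g i x - g i y‖ ≤ L * ‖x - y‖)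
    (xs : EuclideanSpace ℝ (Fin d))
    (hmin : ∀ y, (n : ℝ)⁻¹ * ∑ i, f i xs ≤ (n : ℝ)⁻¹ * ∑ i, f i y)
    (P : Finset (Fin n) → ℝ) (hP : ∀ S, 0 ≤ P S)
    (hPsum : ∑ S : Finset (Fin n), P S = 1)
    (τ γ : ℝ) (hγ : 0 < γ)
    (hp : ∀ i, ∑ S ∈ Finset.univ.filter (fun S : Finset (Fin n) => i ∈ S), P S = τ / n)
    (x : EuclideanSpace ℝ (Fin d)) (φ : Fin n → EuclideanSpace ℝ (Fin d))
    (φnext : Finset (Fin n) → Fin n → EuclideanSpace ℝ (Fin d))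
    (hφnext : ∀ S i, φnext S i = if i ∈ S then x else φ i) :
    ∑ S : Finset (Fin n),
        P S * ∑ i, ‖φnext S i - xs - γ • g i (φnext S i) + γ • g i xs‖ ^ 2 ≤
      (1 - τ / n) * ∑ i, ‖φ i - xs - γ • g i (φ i) + γ • g i xs‖ ^ 2 +
      τ * ‖x - xs‖ ^ 2 +
      2 * L * τ * γ ^ 2 * ((n : ℝ)⁻¹ * ∑ i, f i x - (n : ℝ)⁻¹ * ∑ i, f i xs) := by
  have hnR : (0:ℝ) < n := by exact_mod_cast hn
  have hnne : (n:ℝ) ≠ 0 := ne_of_gt hnR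
  rcases Nat.eq_zero_or_pos d with hd | hd
  · subst hd
    haveI : Subsingleton (EuclideanSpace ℝ (Fin 0)) := ⟨fun a b => by ext i; exact i.elim0⟩
    have hv : ∀ v : EuclideanSpace ℝ (Fin 0), ‖v‖ = 0 := fun v => by
      rw [Subsingleton.elim v 0, norm_zero]
    rw [Subsingleton.elim x xs]
    simp [hv]
  -- main case
  have hL0 : 0 ≤ L := by
    have h := hL ⟨0, hn⟩ (xs + EuclideanSpace.single (⟨0, hd⟩ : Fin d) (1:ℝ)) xs
    have hxv : ‖xs + EuclideanSpace.single (⟨0, hd⟩ : Fin d) (1:ℝ) - xs‖ = 1 := by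
      rw [add_sub_cancel_left, EuclideanSpace.norm_single]
      norm_num
    rw [hxv, mul_one] at h
    exact le_trans (norm_nonneg _) h
  have hτn : 0 ≤ τ / n := by
    rw [← hp ⟨0, hn⟩]; exact Finset.sum_nonneg fun S _ => hP S
  have hτ : 0 ≤ τ := by
    have := mul_nonneg hτn (le_of_lt hnR)
    rwa [div_mul_cancel₀ τ hnne] at this
  set A : Fin n → ℝ := fun i => ‖x - xs - γ • g i x + γ • g i xs‖ ^ 2 with hA
  set B : Fin n → ℝ := fun i => ‖φ i - xs - γ • g i (φ i) + γ • g i xs‖ ^ 2 with hB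
  have hterm : ∀ (S : Finset (Fin n)) (i : Fin n),
      ‖φnext S i - xs - γ • g i (φnext S i) + γ • g i xs‖ ^ 2
        = if i ∈ S then A i else B i := by
    intro S i; rw [hφnext]; split <;> rfl
  have key : ∀ i, ∑ S : Finset (Fin n), P S * (if i ∈ S then A i else B i)
      = (τ / n) * A i + (1 - τ / n) * B i := by
    intro i
    have hnot : ∑ S ∈ univ.filter (fun S : Finset (Fin n) => ¬ i ∈ S), P S = 1 - τ / n := by
      have h := Finset.sum_filter_add_sum_filter_not (univ : Finset (Finset (Fin n)))
        (fun S => i ∈ S) P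
      rw [hp i, hPsum] at h
      linarith
    calc ∑ S : Finset (Fin n), P S * (if i ∈ S then A i else B i)
        = ∑ S : Finset (Fin n), (if i ∈ S then P S * A i else P S * B i) := by
          refine Finset.sum_congr rfl fun S _ => ?_; split <;> rfl
      _ = (∑ S ∈ univ.filter (fun S : Finset (Fin n) => i ∈ S), P S * A i)
          + ∑ S ∈ univ.filter (fun S : Finset (Fin n) => ¬ i ∈ S), P S * B i :=
          Finset.sum_ite _ _
      _ = (∑ S ∈ univ.filter (fun S : Finset (Fin n) => i ∈ S), P S) * A i
          + (∑ S ∈ univ.filter (fun S : Finset (Fin n) => ¬ i ∈ S), P S) * B i := by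
          rw [Finset.sum_mul, Finset.sum_mul]
      _ = (τ / n) * A i + (1 - τ / n) * B i := by rw [hp i, hnot]
  have hLHS : ∑ S : Finset (Fin n),
      P S * ∑ i, ‖φnext S i - xs - γ • g i (φnext S i) + γ • g i xs‖ ^ 2
      = (τ / n) * (∑ i, A i) + (1 - τ / n) * (∑ i, B i) := by
    calc ∑ S : Finset (Fin n), P S * ∑ i, ‖φnext S i - xs - γ • g i (φnext S i) + γ • g i xs‖ ^ 2
        = ∑ S : Finset (Fin n), ∑ i, P S * (if i ∈ S then A i else B i) := by
          simp_rw [hterm, Finset.mul_sum]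
      _ = ∑ i, ∑ S : Finset (Fin n), P S * (if i ∈ S then A i else B i) := Finset.sum_comm
      _ = ∑ i, ((τ / n) * A i + (1 - τ / n) * B i) := Finset.sum_congr rfl fun i _ => key i
      _ = (τ / n) * (∑ i, A i) + (1 - τ / n) * (∑ i, B i) := by
          rw [Finset.sum_add_distrib, ← Finset.mul_sum, ← Finset.mul_sum]
  -- gradient of sum is zero at xs
  have hgF : ∀ i : Fin n, HasFDerivAt (f i)
      (InnerProductSpace.toDual ℝ (EuclideanSpace ℝ (Fin d)) (g i xs)) xs := fun i => hg i xs
  have hsumF : HasFDerivAt (fun y => ∑ i, f i y)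
      (∑ i, InnerProductSpace.toDual ℝ (EuclideanSpace ℝ (Fin d)) (g i xs)) xs :=
    HasFDerivAt.fun_sum (fun i _ => hgF i)
  have hminsum : ∀ y, (∑ i, f i xs) ≤ ∑ i, f i y := fun y =>
    le_of_mul_le_mul_left (hmin y) (by positivity)
  have hloc : IsLocalMin (fun y => ∑ i, f i y) xs := Filter.Eventually.of_forall hminsum
  have hdz : (∑ i, InnerProductSpace.toDual ℝ (EuclideanSpace ℝ (Fin d)) (g i xs)) = 0 :=
    hloc.hasFDerivAt_eq_zero hsumF
  have hgrad0 : (∑ i, g i xs) = 0 := by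
    apply (InnerProductSpace.toDual ℝ (EuclideanSpace ℝ (Fin d))).injective
    rw [map_sum, hdz, map_zero]
  have hmono : ∀ i, 0 ≤ ⟪g i x - g i xs, x - xs⟫ := by
    intro i
    have h1 := grad_convex_ineq (hconv i) (hg i) x xs
    have h2 := grad_convex_ineq (hconv i) (hg i) xs x
    have e : xs - x = -(x - xs) := (neg_sub x xs).symm
    rw [e, inner_neg_right] at h1
    rw [inner_sub_left]
    linarith
  have hcoco : ∀ i, ‖g i x - g i xs‖ ^ 2 ≤ 2 * L * (f i x - f i xs - ⟪g i xs, x - xs⟫) :=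
    fun i => coco (hconv i) (hg i) (hL i) hL0 x xs
  have hsumcoco : ∑ i, ‖g i x - g i xs‖ ^ 2 ≤ 2 * L * ((∑ i, f i x) - ∑ i, f i xs) := by
    calc ∑ i, ‖g i x - g i xs‖ ^ 2
        ≤ ∑ i, 2 * L * (f i x - f i xs - ⟪g i xs, x - xs⟫) :=
          Finset.sum_le_sum fun i _ => hcoco i
      _ = 2 * L * ((∑ i, f i x) - (∑ i, f i xs) - ⟪∑ i, g i xs, x - xs⟫) := by
          rw [sum_inner, ← Finset.mul_sum, Finset.sum_sub_distrib, Finset.sum_sub_distrib]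
      _ = 2 * L * ((∑ i, f i x) - ∑ i, f i xs) := by
          rw [hgrad0, inner_zero_left, sub_zero]
  have hAsum : ∑ i, A i ≤ n * ‖x - xs‖ ^ 2 + 2 * L * γ ^ 2 * ((∑ i, f i x) - ∑ i, f i xs) := by
    have hexp : ∀ i, A i = ‖x - xs‖ ^ 2 - 2 * γ * ⟪g i x - g i xs, x - xs⟫
        + γ ^ 2 * ‖g i x - g i xs‖ ^ 2 := by
      intro i
      have hv : x - xs - γ • g i x + γ • g i xs = (x - xs) - γ • (g i x - g i xs) := by
        rw [smul_sub]; abel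
      show ‖x - xs - γ • g i x + γ • g i xs‖ ^ 2 = _
      rw [hv, norm_sub_sq_real, real_inner_smul_right, norm_smul, Real.norm_eq_abs,
        mul_pow, sq_abs, real_inner_comm]
      ring
    calc ∑ i, A i
        = ∑ i, (‖x - xs‖ ^ 2 - 2 * γ * ⟪g i x - g i xs, x - xs⟫
            + γ ^ 2 * ‖g i x - g i xs‖ ^ 2) := Finset.sum_congr rfl fun i _ => hexp i
      _ ≤ ∑ i, (‖x - xs‖ ^ 2 + γ ^ 2 * ‖g i x - g i xs‖ ^ 2) :=
          Finset.sum_le_sum fun i _ => by nlinarith [hmono i, hγ]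
      _ = n * ‖x - xs‖ ^ 2 + γ ^ 2 * ∑ i, ‖g i x - g i xs‖ ^ 2 := by
          rw [Finset.sum_add_distrib, Finset.sum_const, ← Finset.mul_sum, Finset.card_univ]
          simp [nsmul_eq_mul]
      _ ≤ n * ‖x - xs‖ ^ 2 + γ ^ 2 * (2 * L * ((∑ i, f i x) - ∑ i, f i xs)) := by
          have := mul_le_mul_of_nonneg_left hsumcoco (sq_nonneg γ)
          linarith
      _ = n * ‖x - xs‖ ^ 2 + 2 * L * γ ^ 2 * ((∑ i, f i x) - ∑ i, f i xs) := by ring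
  rw [hLHS]
  have hfinal : (τ / n) * (∑ i, A i)
      ≤ τ * ‖x - xs‖ ^ 2 + 2 * L * τ * γ ^ 2
        * ((n : ℝ)⁻¹ * (∑ i, f i x) - (n : ℝ)⁻¹ * (∑ i, f i xs)) := by
    calc (τ / n) * (∑ i, A i)
        ≤ (τ / n) * (n * ‖x - xs‖ ^ 2 + 2 * L * γ ^ 2 * ((∑ i, f i x) - ∑ i, f i xs)) :=
          mul_le_mul_of_nonneg_left hAsum hτn
      _ = τ * ‖x - xs‖ ^ 2 + 2 * L * τ * γ ^ 2
          * ((n : ℝ)⁻¹ * (∑ i, f i x) - (n : ℝ)⁻¹ * (∑ i, f i xs)) := by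
          field_simp
  linarith
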